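/- For probability measures P and Q on a measurable space with P ≪ Q, the chi-square divergence satisfies the variational identity χ²(P‖Q) = sup over bounded measurable T of (2·E_P[T] − E_Q[T²] − 1). -/

import Mathlib

open MeasureTheory ProbabilityTheory Real

noncomputable def klDiv {𝓧 : Type*} [MeasurableSpace 𝓧] (P Q : Measure 𝓧) : ℝ :=
  ∫ x, Real.log ((P.rnDeriv Q x).toReal) ∂P

noncomputable def chiSq {𝓧 : Type*} [MeasurableSpace 𝓧] (P Q : Measure 𝓧) : ℝ :=
  ∫ x, ((P.rnDeriv Q x).toReal - 1)^2 ∂Q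

section Aux

open Filter

variable {𝓧 : Type*} [MeasurableSpace 𝓧] {P Q : Measure 𝓧}


variable {𝓧 : Type*} [MeasurableSpace 𝓧] {P Q : Measure 𝓧}

lemma bdd_int [IsFiniteMeasure Q] {T : 𝓧 → ℝ} (hT : Measurable T)
    {C : ℝ} (hC : ∀ x, |T x| ≤ C) : Integrable T Q :=
  (integrable_const C).mono' hT.aestronglyMeasurable
    (Filter.Eventually.of_forall fun x => by simpa [Real.norm_eq_abs] using hC x)

lemma aux_change (hPQ : P ≪ Q) [SigmaFinite P] [SigmaFinite Q] (T : 𝓧 → ℝ) :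
    ∫ x, T x ∂P = ∫ x, (P.rnDeriv Q x).toReal * T x ∂Q := by
  rw [← integral_rnDeriv_smul hPQ (f := T)]; rfl

lemma val_eq [IsProbabilityMeasure P] [IsProbabilityMeasure Q] (hPQ : P ≪ Q)
    {T : 𝓧 → ℝ} (hT : Measurable T) {C : ℝ} (hC : ∀ x, |T x| ≤ C) :
    2 * (∫ x, T x ∂P) - (∫ x, (T x)^2 ∂Q) - 1
      = (∫ x, (2 * (P.rnDeriv Q x).toReal * T x - (T x)^2) ∂Q) - 1 := by
  set f : 𝓧 → ℝ := fun x => (P.rnDeriv Q x).toReal with hf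
  have hf_meas : Measurable f := (Measure.measurable_rnDeriv P Q).ennreal_toReal
  have hf_int : Integrable f Q := Measure.integrable_toReal_rnDeriv
  have hfT : Integrable (fun x => f x * T x) Q := by
    refine (hf_int.const_mul C).mono' (hf_meas.mul hT).aestronglyMeasurable
      (Filter.Eventually.of_forall fun x => ?_)
    have h0 : 0 ≤ f x := ENNReal.toReal_nonneg
    have := hC x
    rw [Real.norm_eq_abs, abs_mul, abs_of_nonneg h0]
    nlinarith [abs_nonneg (T x)]
  have hT2 : Integrable (fun x => (T x)^2) Q := by
    refine bdd_int (hT.pow_const 2) (C := C^2) fun x => ?_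
    have := hC x
    rw [abs_pow]
    exact pow_le_pow_left₀ (abs_nonneg _) this 2
  rw [aux_change hPQ T]
  have : (∫ x, (2 * f x * T x - (T x)^2) ∂Q)
      = 2 * (∫ x, f x * T x ∂Q) - ∫ x, (T x)^2 ∂Q := by
    simp_rw [mul_assoc]
    rw [integral_sub (hfT.const_mul 2) hT2, integral_const_mul]
  rw [this]


theorem chiSq_variational_identity' {P Q : Measure 𝓧}
    [IsProbabilityMeasure P] [IsProbabilityMeasure Q] (hPQ : P ≪ Q) :
    (∫ x, ((P.rnDeriv Q x).toReal - 1)^2 ∂Q) =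
      sSup {r : ℝ | ∃ T : 𝓧 → ℝ, Measurable T ∧ (∃ C : ℝ, ∀ x, |T x| ≤ C) ∧
      r = 2 * (∫ x, T x ∂P) - (∫ x, (T x)^2 ∂Q) - 1} := by
  set f : 𝓧 → ℝ := fun x => (P.rnDeriv Q x).toReal with hfdef
  have hf_meas : Measurable f := (Measure.measurable_rnDeriv P Q).ennreal_toReal
  have hf_nonneg : ∀ x, 0 ≤ f x := fun x => ENNReal.toReal_nonneg
  have hf_int : Integrable f Q := Measure.integrable_toReal_rnDeriv
  have hf_one : ∫ x, f x ∂Q = 1 := by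
    rw [hfdef, Measure.integral_toReal_rnDeriv hPQ]; simp
  set S := {r : ℝ | ∃ T : 𝓧 → ℝ, Measurable T ∧ (∃ C : ℝ, ∀ x, |T x| ≤ C) ∧
      r = 2 * (∫ x, T x ∂P) - (∫ x, (T x)^2 ∂Q) - 1} with hSdef
  have hS_ne : S.Nonempty := by
    refine ⟨-1, fun _ => 0, measurable_const, ⟨0, fun x => by simp⟩, by simp⟩
  -- the sequence of truncations
  set T : ℕ → 𝓧 → ℝ := fun n x => min (f x) n with hTdef
  have hT_meas : ∀ n, Measurable (T n) := fun n => hf_meas.min measurable_const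
  have hT_bdd : ∀ n, ∀ x, |T n x| ≤ n := by
    intro n x
    rw [abs_le]
    constructor
    · have : (0:ℝ) ≤ min (f x) n := le_min (hf_nonneg x) (by positivity)
      linarith
    · exact min_le_right _ _
  have hT_nonneg : ∀ n x, 0 ≤ T n x := fun n x => le_min (hf_nonneg x) (by positivity)
  have hT_le_f : ∀ n x, T n x ≤ f x := fun n x => min_le_left _ _
  have hT_mem : ∀ n, (2 * (∫ x, T n x ∂P) - (∫ x, (T n x)^2 ∂Q) - 1) ∈ S := by
    intro n
    exact ⟨T n, hT_meas n, ⟨n, hT_bdd n⟩, rfl⟩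
  have hT_val : ∀ n, 2 * (∫ x, T n x ∂P) - (∫ x, (T n x)^2 ∂Q) - 1
      = (∫ x, (2 * f x * T n x - (T n x)^2) ∂Q) - 1 :=
    fun n => val_eq hPQ (hT_meas n) (hT_bdd n)
  by_cases hint2 : Integrable (fun x => (f x)^2) Q
  · -- integrable case
    have hT2_int : ∀ n, Integrable (fun x => (T n x)^2) Q := by
      intro n
      refine bdd_int ((hT_meas n).pow_const 2) (C := (n:ℝ)^2) fun x => ?_
      rw [abs_pow]
      exact pow_le_pow_left₀ (abs_nonneg _) (hT_bdd n x) 2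
    have hfT_int : ∀ n, Integrable (fun x => f x * T n x) Q := by
      intro n
      refine hint2.mono' (hf_meas.mul (hT_meas n)).aestronglyMeasurable
        (Filter.Eventually.of_forall fun x => ?_)
      rw [Real.norm_eq_abs, abs_mul, abs_of_nonneg (hf_nonneg x),
        abs_of_nonneg (hT_nonneg n x)]
      nlinarith [hT_le_f n x, hT_nonneg n x, hf_nonneg x]
    -- LHS = ∫ f² - 1
    have hLHS : (∫ x, (f x - 1)^2 ∂Q) = (∫ x, (f x)^2 ∂Q) - 1 := by
      have heq : (fun x => (f x - 1)^2) = fun x => ((f x)^2 - 2 * f x) + 1 := by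
        funext x; ring
      have hi1 : Integrable (fun x => f x ^ 2 - 2 * f x) Q :=
        hint2.sub (hf_int.const_mul 2)
      rw [heq, integral_add hi1 (integrable_const 1),
        integral_sub hint2 (hf_int.const_mul 2), integral_const_mul, hf_one,
        integral_const]
      simp only [measure_univ, probReal_univ, ENNReal.toReal_one, smul_eq_mul, mul_one, one_mul]
      ring
    have hub : ∀ r ∈ S, r ≤ (∫ x, (f x)^2 ∂Q) - 1 := by
      rintro r ⟨T', hT', ⟨C, hC⟩, rfl⟩
      rw [val_eq hPQ hT' hC]
      have hfT' : Integrable (fun x => 2 * f x * T' x - (T' x)^2) Q := by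
        have h1 : Integrable (fun x => f x * T' x) Q := by
          refine (hf_int.const_mul C).mono' (hf_meas.mul hT').aestronglyMeasurable
            (Filter.Eventually.of_forall fun x => ?_)
          have := hC x
          rw [Real.norm_eq_abs, abs_mul, abs_of_nonneg (hf_nonneg x)]
          nlinarith [abs_nonneg (T' x), hf_nonneg x]
        have h2 : Integrable (fun x => (T' x)^2) Q := by
          refine bdd_int (hT'.pow_const 2) (C := C^2) fun x => ?_
          rw [abs_pow]
          exact pow_le_pow_left₀ (abs_nonneg _) (hC x) 2
        have h3 : Integrable (fun x => 2 * (f x * T' x) - T' x ^ 2) Q :=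
          (h1.const_mul 2).sub h2
        refine h3.congr (Filter.Eventually.of_forall fun x => by ring)
      have hmono : ∀ x, 2 * f x * T' x - (T' x)^2 ≤ (f x)^2 := by
        intro x; nlinarith [sq_nonneg (f x - T' x)]
      have := integral_mono hfT' hint2 hmono
      linarith
    have hbdd : BddAbove S := ⟨(∫ x, (f x)^2 ∂Q) - 1, hub⟩
    -- value of truncations
    have hdiff_int : ∀ n, Integrable (fun x => (f x - T n x)^2) Q := by
      intro n
      have h3 : Integrable (fun x => (f x ^ 2 - 2 * (f x * T n x)) + T n x ^ 2) Q :=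
        (hint2.sub ((hfT_int n).const_mul 2)).add (hT2_int n)
      refine h3.congr (Filter.Eventually.of_forall fun x => by ring)
    have hval2 : ∀ n, (∫ x, (2 * f x * T n x - (T n x)^2) ∂Q)
        = (∫ x, (f x)^2 ∂Q) - ∫ x, (f x - T n x)^2 ∂Q := by
      intro n
      rw [← integral_sub hint2 (hdiff_int n)]
      congr 1
      funext x
      ring
    -- tendsto
    have htend : Tendsto (fun n => ∫ x, (f x - T n x)^2 ∂Q) atTop (nhds 0) := by
      have h0 : (0:ℝ) = ∫ x, (0:ℝ) ∂Q := by simp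
      rw [h0]
      refine tendsto_integral_of_dominated_convergence (fun x => (f x)^2)
        (fun n => ((hf_meas.sub (hT_meas n)).pow_const 2).aestronglyMeasurable)
        hint2 (fun n => Filter.Eventually.of_forall fun x => ?_)
        (Filter.Eventually.of_forall fun x => ?_)
      · rw [Real.norm_eq_abs, abs_pow]
        have h1 : 0 ≤ f x - T n x := by linarith [hT_le_f n x]
        rw [abs_of_nonneg h1]
        have h2 : f x - T n x ≤ f x := by linarith [hT_nonneg n x]
        exact pow_le_pow_left₀ h1 h2 2
      · refine tendsto_const_nhds.congr' ?_
        rw [Filter.EventuallyEq, eventually_atTop]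
        refine ⟨⌈f x⌉₊, fun n hn => ?_⟩
        have : f x ≤ (n:ℝ) := (Nat.le_ceil _).trans (by exact_mod_cast hn)
        simp [hTdef, min_eq_left this]
    have hrn_tend : Tendsto (fun n => 2 * (∫ x, T n x ∂P) - (∫ x, (T n x)^2 ∂Q) - 1)
        atTop (nhds ((∫ x, (f x)^2 ∂Q) - 1)) := by
      have : (fun n => 2 * (∫ x, T n x ∂P) - (∫ x, (T n x)^2 ∂Q) - 1)
          = fun n => ((∫ x, (f x)^2 ∂Q) - ∫ x, (f x - T n x)^2 ∂Q) - 1 := by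
        funext n; rw [hT_val n, hval2 n]
      rw [this]
      have := (tendsto_const_nhds (x := (∫ x, (f x)^2 ∂Q)) (f := atTop (α := ℕ))).sub htend
      simpa using this.sub (tendsto_const_nhds (x := (1:ℝ)))
    have hle : (∫ x, (f x)^2 ∂Q) - 1 ≤ sSup S := by
      refine le_of_tendsto hrn_tend (Filter.Eventually.of_forall fun n => ?_)
      exact le_csSup hbdd (hT_mem n)
    rw [hLHS]
    exact le_antisymm hle (csSup_le hS_ne hub)
  · -- non-integrable case : both sides are 0... LHS = 0
    have hLHS : (∫ x, (f x - 1)^2 ∂Q) = 0 := by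
      refine integral_undef fun h => hint2 ?_
      have h3 : Integrable (fun x => ((f x - 1) ^ 2 + 2 * f x) - 1) Q :=
        (h.add (hf_int.const_mul 2)).sub (integrable_const 1)
      refine h3.congr (Filter.Eventually.of_forall fun x => by ring)
    have hnotbdd : ¬ BddAbove S := by
      rintro ⟨C, hC⟩
      rw [mem_upperBounds] at hC
      -- ∫⁻ version
      set g : ℕ → 𝓧 → ENNReal := fun n x => ENNReal.ofReal ((T n x)^2) with hgdef
      have hg_meas : ∀ n, Measurable (g n) :=
        fun n => ((hT_meas n).pow_const 2).ennreal_ofReal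
      have hg_mono : Monotone g := by
        intro m n hmn x
        refine ENNReal.ofReal_le_ofReal ?_
        refine pow_le_pow_left₀ (hT_nonneg m x) ?_ 2
        exact min_le_min le_rfl (by exact_mod_cast hmn)
      have hg_sup : ∀ x, (⨆ n, g n x) = ENNReal.ofReal ((f x)^2) := by
        intro x
        refine le_antisymm (iSup_le fun n => ENNReal.ofReal_le_ofReal
          (pow_le_pow_left₀ (hT_nonneg n x) (hT_le_f n x) 2)) ?_
        refine le_iSup_of_le ⌈f x⌉₊ ?_
        rw [hgdef]
        simp only [hTdef]
        rw [min_eq_left (Nat.le_ceil _)]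
      have hsup_top : (∫⁻ x, ENNReal.ofReal ((f x)^2) ∂Q) = ⊤ := by
        by_contra h
        refine hint2 ⟨(hf_meas.pow_const 2).aestronglyMeasurable, ?_⟩
        rw [hasFiniteIntegral_iff_ofReal (Filter.Eventually.of_forall fun x => sq_nonneg _)]
        exact lt_top_iff_ne_top.mpr h
      have hlim : (⨆ n, ∫⁻ x, g n x ∂Q) = ⊤ := by
        rw [← lintegral_iSup hg_meas hg_mono]
        simp_rw [hg_sup]
        exact hsup_top
      -- find n with large integral
      obtain ⟨n, hn⟩ : ∃ n, ENNReal.ofReal (max (C + 1) 0) < ∫⁻ x, g n x ∂Q := by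
        by_contra h
        push_neg at h
        have h2 := iSup_le h
        rw [hlim] at h2
        exact ENNReal.ofReal_ne_top (top_le_iff.mp h2)
      have hg_ne_top : (∫⁻ x, g n x ∂Q) ≠ ⊤ := by
        have hb : ∀ x, g n x ≤ ENNReal.ofReal ((n:ℝ)^2) := by
          intro x
          refine ENNReal.ofReal_le_ofReal ?_
          have := hT_bdd n x
          nlinarith [abs_nonneg (T n x), le_abs_self (T n x), neg_abs_le (T n x)]
        have := lintegral_mono (μ := Q) hb
        rw [lintegral_const] at this
        simp only [measure_univ, mul_one] at this
        exact (this.trans_lt ENNReal.ofReal_lt_top).ne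
      have hTn2_eq : (∫ x, (T n x)^2 ∂Q) = (∫⁻ x, g n x ∂Q).toReal := by
        rw [integral_eq_lintegral_of_nonneg_ae
          (Filter.Eventually.of_forall fun x => sq_nonneg _)
          ((hT_meas n).pow_const 2).aestronglyMeasurable]
      have hTn2_gt : max (C + 1) 0 < ∫ x, (T n x)^2 ∂Q := by
        rw [hTn2_eq]
        rw [← ENNReal.toReal_ofReal (le_max_right (C+1) 0)]
        exact ENNReal.toReal_strict_mono hg_ne_top hn
      -- value lower bound
      have hT2_int : Integrable (fun x => (T n x)^2) Q := by
        refine bdd_int ((hT_meas n).pow_const 2) (C := (n:ℝ)^2) fun x => ?_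
        rw [abs_pow]
        exact pow_le_pow_left₀ (abs_nonneg _) (hT_bdd n x) 2
      have hcomb_int : Integrable (fun x => 2 * f x * T n x - (T n x)^2) Q := by
        have h1 : Integrable (fun x => f x * T n x) Q := by
          refine (hf_int.const_mul n).mono' (hf_meas.mul (hT_meas n)).aestronglyMeasurable
            (Filter.Eventually.of_forall fun x => ?_)
          have := hT_bdd n x
          rw [Real.norm_eq_abs, abs_mul, abs_of_nonneg (hf_nonneg x)]
          nlinarith [abs_nonneg (T n x), hf_nonneg x]
        have h3 : Integrable (fun x => 2 * (f x * T n x) - T n x ^ 2) Q :=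
          (h1.const_mul 2).sub hT2_int
        refine h3.congr (Filter.Eventually.of_forall fun x => by ring)
      have hptwise : ∀ x, (T n x)^2 ≤ 2 * f x * T n x - (T n x)^2 := by
        intro x
        nlinarith [hT_le_f n x, hT_nonneg n x]
      have hint_mono := integral_mono hT2_int hcomb_int hptwise
      have hrn := hT_val n
      have hmem := hC _ (hT_mem n)
      have : max (C+1) 0 - 1 < 2 * (∫ x, T n x ∂P) - (∫ x, (T n x)^2 ∂Q) - 1 := by
        rw [hrn]
        have := hTn2_gt
        linarith
      have hge : C + 1 ≤ max (C+1) 0 := le_max_left _ _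
      linarith [hmem, hge, this]
    rw [Real.sSup_of_not_bddAbove hnotbdd]
    exact hLHS


end Aux

theorem chiSq_variational_identity {𝓧 : Type*} [MeasurableSpace 𝓧]
    (P Q : Measure 𝓧) [IsProbabilityMeasure P] [IsProbabilityMeasure Q] (hPQ : P ≪ Q) :
    chiSq P Q = sSup {r : ℝ | ∃ T : 𝓧 → ℝ, Measurable T ∧ (∃ C : ℝ, ∀ x, |T x| ≤ C) ∧
      r = 2 * (∫ x, T x ∂P) - (∫ x, (T x)^2 ∂Q) - 1} := by
  rw [chiSq]
  exact chiSq_variational_identity' hPQ
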